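/- Let T > 0 and let w : [0,∞) → ℝ be positive, non-increasing, with w(0)=1 and satisfying the semigroup condition w(s) ≥ w(s−t)w(t). Let K : [0,∞) → ℝ be measurable with ∫₀^∞ |K(τ)|² w(τ)⁻¹ dτ ≤ γ². Then the Volterra operator (Sf)(τ) = ∫_τ^T K(ρ−τ) f(ρ) dρ on L²((0,T), w(τ)dτ) is Hilbert–Schmidt with Hilbert–Schmidt norm at most γ√T, and hence compact. -/

import Mathlib

open MeasureTheory Set

/-- Hilbert–Schmidt property of the Volterra history operator
`(Sf)(τ) = ∫_τ^T K(ρ−τ) f(ρ) dρ` on `L²((0,T), w(τ)dτ)`: writing the operator with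
kernel `k(τ,ρ) = K(ρ−τ)1_{ρ≥τ} w(ρ)⁻¹`, its Hilbert–Schmidt norm
`(∫₀^T (∫_τ^T K(ρ−τ)² w(ρ)⁻¹ dρ) w(τ) dτ)^{1/2}` is at most `γ√T` whenever
`∫₀^∞ K(τ)² w(τ)⁻¹ dτ ≤ γ²`. -/
theorem volterra_hilbert_schmidt_bound (T γ : ℝ) (hT : 0 < T) (hγ : 0 ≤ γ)
    (w K : ℝ → ℝ)
    (hw_pos : ∀ τ, 0 ≤ τ → 0 < w τ)
    (hw_mono : ∀ t s : ℝ, 0 ≤ t → t ≤ s → w s ≤ w t)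
    (hw0 : w 0 = 1)
    (hw_semi : ∀ t s : ℝ, 0 ≤ t → t ≤ s → w (s - t) * w t ≤ w s)
    (hKmeas : Measurable K) (hwmeas : Measurable w)
    (hint : IntegrableOn (fun τ => (K τ) ^ 2 * (w τ)⁻¹) (Ioi 0))
    (hKL2 : ∫ τ in Ioi (0:ℝ), (K τ) ^ 2 * (w τ)⁻¹ ≤ γ ^ 2) :
    Real.sqrt (∫ τ in Ioc (0:ℝ) T,
        (∫ ρ in Ioc τ T, (K (ρ - τ)) ^ 2 * (w ρ)⁻¹) * w τ)
      ≤ γ * Real.sqrt T := by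
  set g : ℝ → ℝ := fun u => K u ^ 2 * (w u)⁻¹ with hg
  have hg_nonneg : ∀ u : ℝ, 0 ≤ u → 0 ≤ g u := fun u hu =>
    mul_nonneg (sq_nonneg _) (inv_nonneg.2 (hw_pos u hu).le)
  -- key pointwise-in-τ bound
  have key : ∀ τ ∈ Ioc (0:ℝ) T,
      (∫ ρ in Ioc τ T, (K (ρ - τ)) ^ 2 * (w ρ)⁻¹) * w τ ≤ γ ^ 2 := by
    intro τ hτ
    obtain ⟨hτ0, hτT⟩ := hτ
    have hTτ : (0:ℝ) ≤ T - τ := by linarith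
    -- integrability of the translated g on Ioc τ T
    have hgI : IntegrableOn g (Ioc 0 (T - τ)) := hint.mono_set Ioc_subset_Ioi_self
    have hIntI : IntervalIntegrable g volume 0 (T - τ) :=
      (intervalIntegrable_iff_integrableOn_Ioc_of_le hTτ).2 hgI
    have hIntI' : IntervalIntegrable (fun ρ => g (ρ - τ)) volume τ T := by
      have h := hIntI.comp_sub_right τ
      simpa using h
    have hTrI : IntegrableOn (fun ρ => g (ρ - τ)) (Ioc τ T) :=
      (intervalIntegrable_iff_integrableOn_Ioc_of_le hτT).1 hIntI'
    -- pointwise bound on Ioc τ T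
    have hpt : ∀ ρ ∈ Ioc τ T, (K (ρ - τ)) ^ 2 * (w ρ)⁻¹ * w τ ≤ g (ρ - τ) := by
      intro ρ hρ
      have hρτ : τ ≤ ρ := hρ.1.le
      have hρ0 : (0:ℝ) ≤ ρ := le_trans hτ0.le hρτ
      have h1 : w (ρ - τ) * w τ ≤ w ρ := hw_semi τ ρ hτ0.le hρτ
      have hwρ : 0 < w ρ := hw_pos ρ hρ0
      have hwτ : 0 < w τ := hw_pos τ hτ0.le
      have hwd : 0 < w (ρ - τ) := hw_pos _ (by linarith)
      have h2 : (w ρ)⁻¹ * w τ ≤ (w (ρ - τ))⁻¹ := by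
        rw [inv_eq_one_div, inv_eq_one_div, div_mul_eq_mul_div,
          div_le_div_iff₀ hwρ hwd]
        nlinarith
      calc (K (ρ - τ)) ^ 2 * (w ρ)⁻¹ * w τ
          = (K (ρ - τ)) ^ 2 * ((w ρ)⁻¹ * w τ) := by ring
        _ ≤ (K (ρ - τ)) ^ 2 * (w (ρ - τ))⁻¹ :=
            mul_le_mul_of_nonneg_left h2 (sq_nonneg _)
        _ = g (ρ - τ) := rfl
    -- integrability of the lhs integrand
    have hmeas : AEStronglyMeasurable (fun ρ => (K (ρ - τ)) ^ 2 * (w ρ)⁻¹ * w τ)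
        (volume.restrict (Ioc τ T)) := by
      exact (((hKmeas.comp (measurable_id.sub_const τ)).pow_const 2).mul
        hwmeas.inv |>.mul_const (w τ)).aestronglyMeasurable
    have hlhsI : IntegrableOn (fun ρ => (K (ρ - τ)) ^ 2 * (w ρ)⁻¹ * w τ) (Ioc τ T) := by
      refine hTrI.mono' hmeas ?_
      filter_upwards [ae_restrict_mem measurableSet_Ioc] with ρ hρ
      have hρ0 : (0:ℝ) ≤ ρ := le_trans hτ0.le hρ.1.le
      have hnn : 0 ≤ (K (ρ - τ)) ^ 2 * (w ρ)⁻¹ * w τ :=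
        mul_nonneg (mul_nonneg (sq_nonneg _) (inv_nonneg.2 (hw_pos ρ hρ0).le))
          (hw_pos τ hτ0.le).le
      rw [Real.norm_of_nonneg hnn]
      exact hpt ρ hρ
    calc (∫ ρ in Ioc τ T, (K (ρ - τ)) ^ 2 * (w ρ)⁻¹) * w τ
        = ∫ ρ in Ioc τ T, (K (ρ - τ)) ^ 2 * (w ρ)⁻¹ * w τ := by
          rw [← integral_mul_const]
      _ ≤ ∫ ρ in Ioc τ T, g (ρ - τ) :=
          setIntegral_mono_on hlhsI hTrI measurableSet_Ioc hpt
      _ = ∫ u in Ioc 0 (T - τ), g u := by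
          rw [← intervalIntegral.integral_of_le hτT,
            intervalIntegral.integral_comp_sub_right g τ, sub_self,
            intervalIntegral.integral_of_le hTτ]
      _ ≤ ∫ u in Ioi (0:ℝ), g u := by
          refine setIntegral_mono_set hint ?_ (HasSubset.Subset.eventuallyLE Ioc_subset_Ioi_self)
          filter_upwards [ae_restrict_mem measurableSet_Ioi] with u hu
          exact hg_nonneg u (le_of_lt hu)
      _ ≤ γ ^ 2 := hKL2
  -- the outer integral
  have houter : (∫ τ in Ioc (0:ℝ) T,
      (∫ ρ in Ioc τ T, (K (ρ - τ)) ^ 2 * (w ρ)⁻¹) * w τ) ≤ γ ^ 2 * T := by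
    by_cases hF : IntegrableOn
        (fun τ => (∫ ρ in Ioc τ T, (K (ρ - τ)) ^ 2 * (w ρ)⁻¹) * w τ) (Ioc 0 T)
    · calc (∫ τ in Ioc (0:ℝ) T,
            (∫ ρ in Ioc τ T, (K (ρ - τ)) ^ 2 * (w ρ)⁻¹) * w τ)
          ≤ ∫ _ in Ioc (0:ℝ) T, γ ^ 2 :=
            setIntegral_mono_on hF (integrableOn_const
              (by simp [Real.volume_Ioc]))
              measurableSet_Ioc key
        _ = γ ^ 2 * T := by
            simp [Real.volume_Ioc, hT.le, mul_comm]
    · rw [integral_undef hF]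
      positivity
  calc Real.sqrt (∫ τ in Ioc (0:ℝ) T,
        (∫ ρ in Ioc τ T, (K (ρ - τ)) ^ 2 * (w ρ)⁻¹) * w τ)
      ≤ Real.sqrt (γ ^ 2 * T) := Real.sqrt_le_sqrt houter
    _ = γ * Real.sqrt T := by
        rw [Real.sqrt_mul (sq_nonneg γ), Real.sqrt_sq hγ]
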